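/- arXiv:1312.1359 — 8 statements merged into one kernel-verified Lean document; each statement's English description precedes it below -/
import Mathlib

section
/- Let ω be a hermitian positive linear functional on a non-unital complex *-algebra A. Assume: (HB) there exists δ > 0 such that ‖ω a‖² ≤ δ · (ω (star a * a)).re for all a ∈ A; (L.3) for every x ∈ A there exists γₓ > 0 such that ‖ω (star x * a)‖ ≤ γₓ · Real.sqrt ((ω (star a * a)).re) for all a ∈ A; (EHB) there exists ζ > 0 such that for every x ∈ A and every real p ≥ 0 satisfying ‖ω (star x * a)‖² ≤ p · (ω (star a * a)).re for all a ∈ A, one has ‖ω (star x)‖ ≤ ζ · Real.sqrt p. Then for every real γ ≥ δ, the extension ω^e with parameter γ is hermitian (ω^e (star X) = conj (ω^e X) for all X), positive (ω^e (star X * X) has zero imaginary part and nonnegative real part for all X in Unitization ℂ A), satisfies ω^e ∘ ι = ω, and satisfies condition (L.3) on the unitization: for every X in Unitization ℂ A there exists Γ > 0 such that ‖ω^e (star X * Y)‖ ≤ Γ · Real.sqrt ((ω^e (star Y * Y)).re) for all Y in Unitization ℂ A. -/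
lemma cs_aux {V : Type*} [AddCommGroup V] [Module ℂ V] (B : V → V → ℂ)
    (h_add_r : ∀ x y z : V, B x (y + z) = B x y + B x z)
    (h_smul_r : ∀ (c : ℂ) (x y : V), B x (c • y) = c * B x y)
    (h_conj : ∀ x y : V, B y x = starRingEnd ℂ (B x y))
    (h_pos : ∀ x : V, 0 ≤ (B x x).re) :
    ∀ x y : V, ‖B x y‖ ^ 2 ≤ (B x x).re * (B y y).re := by
  intro x y
  have key : ∀ r : ℝ, 0 ≤ (B x x).re + 2 * r * ‖B x y‖ ^ 2
      + r ^ 2 * ‖B x y‖ ^ 2 * (B y y).re := by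
    intro r
    set α := B x y with hα
    set c : ℂ := (r : ℂ) * starRingEnd ℂ α with hc
    have h0 := h_pos (x + c • y)
    have hxx : starRingEnd ℂ (B x x) = B x x := (h_conj x x).symm
    have hyy : starRingEnd ℂ (B y y) = B y y := (h_conj y y).symm
    have hexp : B (x + c • y) (x + c • y)
        = B x x + c * α + starRingEnd ℂ c * starRingEnd ℂ α
          + c * starRingEnd ℂ c * (B y y) := by
      have h1 : B (x + c • y) (x + c • y)
          = B (x + c • y) x + c * B (x + c • y) y := by
        rw [h_add_r, h_smul_r]
      have h2 : B (x + c • y) x = B x x + starRingEnd ℂ c * starRingEnd ℂ α := by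
        rw [h_conj, h_add_r, h_smul_r, map_add, map_mul, hxx, ← hα]
      have h3 : B (x + c • y) y = α + starRingEnd ℂ c * B y y := by
        rw [h_conj, h_add_r, h_smul_r, map_add, map_mul, hyy, h_conj x y,
          Complex.conj_conj, ← hα]
      rw [h1, h2, h3]; ring
    have hcc : c * starRingEnd ℂ c = ((r ^ 2 * ‖α‖ ^ 2 : ℝ) : ℂ) := by
      rw [Complex.mul_conj, hc, Complex.normSq_mul, Complex.normSq_conj,
        Complex.normSq_ofReal, Complex.normSq_eq_norm_sq]
      push_cast
      ring
    have hca : c * α = ((r * ‖α‖ ^ 2 : ℝ) : ℂ) := by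
      rw [hc, mul_assoc, Complex.conj_mul']
      push_cast
      ring
    have hca' : starRingEnd ℂ c * starRingEnd ℂ α = ((r * ‖α‖ ^ 2 : ℝ) : ℂ) := by
      rw [← map_mul, hca, Complex.conj_ofReal]
    rw [hexp, hca, hca', hcc] at h0
    simp only [Complex.add_re, Complex.ofReal_re, Complex.ofReal_im, Complex.mul_re,
      zero_mul, sub_zero] at h0
    linarith
  have hαnn : (0:ℝ) ≤ ‖B x y‖ ^ 2 := by positivity
  rcases eq_or_ne (‖B x y‖) 0 with h | h
  · rw [h]
    have := mul_nonneg (h_pos x) (h_pos y)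
    simpa using this
  rcases eq_or_lt_of_le (h_pos y) with ht | ht
  · exfalso
    have hα2 : (0:ℝ) < ‖B x y‖ ^ 2 := by positivity
    have hk := key (-((B x x).re + 1) / (2 * ‖B x y‖ ^ 2))
    rw [← ht] at hk
    have hne : (2 * ‖B x y‖ ^ 2 : ℝ) ≠ 0 := by positivity
    have e1 : 2 * (-((B x x).re + 1) / (2 * ‖B x y‖ ^ 2)) * ‖B x y‖ ^ 2
        = -((B x x).re + 1) := by
      rw [show 2 * (-((B x x).re + 1) / (2 * ‖B x y‖ ^ 2)) * ‖B x y‖ ^ 2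
        = -((B x x).re + 1) * (2 * ‖B x y‖ ^ 2) / (2 * ‖B x y‖ ^ 2) by ring,
        mul_div_cancel_right₀ _ hne]
    rw [e1] at hk
    linarith
  · set t := (B y y).re with htdef
    have ht' : (0:ℝ) < t := ht
    have hk := key (-1 / t)
    have e1 : 2 * (-1 / t) * ‖B x y‖ ^ 2 = -(2 * (‖B x y‖ ^ 2 / t)) := by
      field_simp
    have e2 : (-1 / t) ^ 2 * ‖B x y‖ ^ 2 * t = ‖B x y‖ ^ 2 / t := by
      field_simp
    rw [e1, e2] at hk
    have hle : ‖B x y‖ ^ 2 / t ≤ (B x x).re := by linarith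
    calc ‖B x y‖ ^ 2 = (‖B x y‖ ^ 2 / t) * t := by field_simp
      _ ≤ (B x x).re * t := mul_le_mul_of_nonneg_right hle (le_of_lt ht')

/-- The extension `ω^e` with parameter `γ` of a linear functional `ω` on a non-unital
complex *-algebra `A` to the unitization `Unitization ℂ A`:
`ω^e((λ, x)) = ω(x) + λ·γ`. -/
noncomputable def omegaExt {A : Type*} [NonUnitalRing A] [Module ℂ A]
    (ω : A →ₗ[ℂ] ℂ) (γ : ℝ) : Unitization ℂ A → ℂ :=
  fun X => ω X.snd + X.fst * γ

section helpers

variable {A : Type*} [NonUnitalRing A] [StarRing A] [Module ℂ A]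
    [StarModule ℂ A] [SMulCommClass ℂ A A] [IsScalarTower ℂ A A]
    (ω : A →ₗ[ℂ] ℂ) (γ : ℝ)

lemma omegaExt_add (X Y : Unitization ℂ A) :
    omegaExt ω γ (X + Y) = omegaExt ω γ X + omegaExt ω γ Y := by
  simp only [omegaExt, Unitization.fst_add, Unitization.snd_add, map_add]
  push_cast
  ring

lemma omegaExt_smul (c : ℂ) (X : Unitization ℂ A) :
    omegaExt ω γ (c • X) = c * omegaExt ω γ X := by
  simp only [omegaExt, Unitization.fst_smul, Unitization.snd_smul, map_smul,
    smul_eq_mul]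
  ring

lemma omegaExt_star (hherm : ∀ x : A, ω (star x) = starRingEnd ℂ (ω x))
    (X : Unitization ℂ A) :
    omegaExt ω γ (star X) = starRingEnd ℂ (omegaExt ω γ X) := by
  simp only [omegaExt, Unitization.fst_star, Unitization.snd_star, hherm,
    map_add, map_mul, Complex.conj_ofReal, RCLike.star_def]

end helpers

/-- **Main representability theorem.** If a hermitian positive linear functional `ω` on a
non-unital complex *-algebra satisfies (HB), (L.3) and (EHB), then for every `γ ≥ δ` the
extension `ω^e` to the unitization is hermitian, positive, extends `ω`, and satisfies
(L.3) on the unitization. -/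
theorem extension_representable {A : Type*} [NonUnitalRing A] [StarRing A] [Module ℂ A]
    [StarModule ℂ A] [SMulCommClass ℂ A A] [IsScalarTower ℂ A A]
    (ω : A →ₗ[ℂ] ℂ)
    (hpos : ∀ a : A, (ω (star a * a)).im = 0 ∧ 0 ≤ (ω (star a * a)).re)
    (hherm : ∀ x : A, ω (star x) = starRingEnd ℂ (ω x))
    (δ : ℝ) (hδ : 0 < δ)
    (hHB : ∀ a : A, ‖ω a‖ ^ 2 ≤ δ * (ω (star a * a)).re)
    (hL3 : ∀ x : A, ∃ γx > 0, ∀ a : A,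
      ‖ω (star x * a)‖ ≤ γx * Real.sqrt (ω (star a * a)).re)
    (ζ : ℝ) (hζ : 0 < ζ)
    (hEHB : ∀ (x : A) (p : ℝ), 0 ≤ p →
      (∀ a : A, ‖ω (star x * a)‖ ^ 2 ≤ p * (ω (star a * a)).re) →
      ‖ω (star x)‖ ≤ ζ * Real.sqrt p)
    (γ : ℝ) (hγ : δ ≤ γ) :
    (∀ X : Unitization ℂ A, omegaExt ω γ (star X) = starRingEnd ℂ (omegaExt ω γ X)) ∧
    (∀ X : Unitization ℂ A, (omegaExt ω γ (star X * X)).im = 0 ∧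
      0 ≤ (omegaExt ω γ (star X * X)).re) ∧
    (∀ x : A, omegaExt ω γ (x : Unitization ℂ A) = ω x) ∧
    (∀ X : Unitization ℂ A, ∃ Γ > 0, ∀ Y : Unitization ℂ A,
      ‖omegaExt ω γ (star X * Y)‖ ≤ Γ * Real.sqrt (omegaExt ω γ (star Y * Y)).re) := by
  have hγ0 : (0:ℝ) ≤ γ := le_trans hδ.le hγ
  -- positivity of the extension
  have hpos_ext : ∀ X : Unitization ℂ A, (omegaExt ω γ (star X * X)).im = 0 ∧
      0 ≤ (omegaExt ω γ (star X * X)).re := by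
    intro X
    have hfst : (star X * X).fst = starRingEnd ℂ X.fst * X.fst := by
      simp [Unitization.fst_mul, Unitization.fst_star]
    have hsnd : (star X * X).snd
        = starRingEnd ℂ X.fst • X.snd + X.fst • star X.snd + star X.snd * X.snd := by
      simp [Unitization.snd_mul, Unitization.snd_star, Unitization.fst_star]
    set z : ℂ := starRingEnd ℂ X.fst * ω X.snd with hz
    set w : ℂ := ω (star X.snd * X.snd) with hw
    have hval : omegaExt ω γ (star X * X)
        = z + starRingEnd ℂ z + w + ((Complex.normSq X.fst * γ : ℝ) : ℂ) := by
      show ω ((star X * X).snd) + (star X * X).fst * γ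
        = z + starRingEnd ℂ z + w + ((Complex.normSq X.fst * γ : ℝ) : ℂ)
      rw [hfst, hsnd, map_add, map_add, map_smul, map_smul, smul_eq_mul, smul_eq_mul,
        hherm]
      have h1 : X.fst * starRingEnd ℂ (ω X.snd) = starRingEnd ℂ z := by
        rw [hz, map_mul, Complex.conj_conj]
      have h2 : starRingEnd ℂ X.fst * X.fst = ((Complex.normSq X.fst : ℝ) : ℂ) := by
        rw [Complex.conj_mul']
        norm_cast
        rw [Complex.normSq_eq_norm_sq]
      rw [h1, h2, hz, hw]
      push_cast
      ring
    constructor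
    · rw [hval]
      have himw : w.im = 0 := (hpos X.snd).1
      simp [Complex.add_im, Complex.conj_im, himw]
    · rw [hval]
      have hs : (0:ℝ) ≤ w.re := (hpos X.snd).2
      have h1 : ‖ω X.snd‖ ^ 2 ≤ γ * w.re :=
        le_trans (hHB X.snd) (mul_le_mul_of_nonneg_right hγ hs)
      have h2 : ‖ω X.snd‖ ≤ Real.sqrt γ * Real.sqrt w.re := by
        rw [← Real.sqrt_mul hγ0]
        calc ‖ω X.snd‖ = Real.sqrt (‖ω X.snd‖ ^ 2) := (Real.sqrt_sq (norm_nonneg _)).symm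
          _ ≤ Real.sqrt (γ * w.re) := Real.sqrt_le_sqrt h1
      have habs : ‖z‖ = ‖X.fst‖ * ‖ω X.snd‖ := by
        rw [hz, norm_mul, Complex.norm_conj]
      have h3 : -(‖X.fst‖ * ‖ω X.snd‖) ≤ z.re := by
        rw [← habs]; exact (abs_le.1 (Complex.abs_re_le_norm z)).1
      have h5 : ‖X.fst‖ * ‖ω X.snd‖
          ≤ ‖X.fst‖ * (Real.sqrt γ * Real.sqrt w.re) :=
        mul_le_mul_of_nonneg_left h2 (norm_nonneg X.fst)
      have h4 := two_mul_le_add_sq (‖X.fst‖ * Real.sqrt γ) (Real.sqrt w.re)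
      have hn : Complex.normSq X.fst = ‖X.fst‖ ^ 2 :=
        Complex.normSq_eq_norm_sq X.fst
      have hsq1 : Real.sqrt γ ^ 2 = γ := Real.sq_sqrt hγ0
      have hsq2 : Real.sqrt w.re ^ 2 = w.re := Real.sq_sqrt hs
      simp only [Complex.add_re, Complex.conj_re, Complex.ofReal_re]
      nlinarith [h3, h5, h4, hsq1, hsq2, hn, Real.sqrt_nonneg γ, Real.sqrt_nonneg w.re,
        norm_nonneg X.fst, norm_nonneg (ω X.snd)]
  -- the sesquilinear form and Cauchy–Schwarz
  set B : Unitization ℂ A → Unitization ℂ A → ℂ :=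
    fun X Y => omegaExt ω γ (star X * Y) with hB
  have hBadd : ∀ x y z : Unitization ℂ A, B x (y + z) = B x y + B x z := by
    intro x y z
    simp only [hB, mul_add, omegaExt_add]
  have hBsmul : ∀ (c : ℂ) (x y : Unitization ℂ A), B x (c • y) = c * B x y := by
    intro c x y
    simp only [hB, mul_smul_comm, omegaExt_smul]
  have hBconj : ∀ x y : Unitization ℂ A, B y x = starRingEnd ℂ (B x y) := by
    intro x y
    have : star y * x = star (star x * y) := by rw [star_mul, star_star]
    simp only [hB, this, omegaExt_star ω γ hherm]
  have hBpos : ∀ x : Unitization ℂ A, 0 ≤ (B x x).re := fun x => (hpos_ext x).2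
  refine ⟨omegaExt_star ω γ hherm, hpos_ext, ?_, ?_⟩
  · intro x
    simp [omegaExt]
  · intro X
    refine ⟨Real.sqrt (B X X).re + 1, by positivity, fun Y => ?_⟩
    have hcs := cs_aux B hBadd hBsmul hBconj hBpos X Y
    have h1 : ‖B X Y‖ = Real.sqrt (‖B X Y‖ ^ 2) := (Real.sqrt_sq (norm_nonneg _)).symm
    calc ‖B X Y‖ = Real.sqrt (‖B X Y‖ ^ 2) := h1
      _ ≤ Real.sqrt ((B X X).re * (B Y Y).re) := Real.sqrt_le_sqrt hcs
      _ = Real.sqrt (B X X).re * Real.sqrt (B Y Y).re := Real.sqrt_mul (hBpos X) _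
      _ ≤ (Real.sqrt (B X X).re + 1) * Real.sqrt (B Y Y).re := by
          apply mul_le_mul_of_nonneg_right _ (Real.sqrt_nonneg _)
          linarith
end

section
/- Let ω be a hermitian positive linear functional on a non-unital complex *-algebra A, and let γ > 0 satisfy ‖ω a‖² ≤ γ · (ω (star a * a)).re for all a ∈ A. Fix x ∈ A and η ∈ ℂ, and suppose: γₓ > 0 satisfies ‖ω (star x * a)‖ ≤ γₓ · Real.sqrt ((ω (star a * a)).re) for all a ∈ A; p ≥ 0 satisfies ‖ω (star x * a)‖² ≤ p · (ω (star a * a)).re for all a ∈ A; and ζ > 0 satisfies ‖ω (star x)‖ ≤ ζ · Real.sqrt p. Set K := max (γₓ + ‖η‖ · Real.sqrt γ) (ζ · Real.sqrt p / Real.sqrt γ + ‖η‖ · Real.sqrt γ) and Γ := max (2 * K^2) (‖η‖^2 * γ). Then for every a ∈ A and μ ∈ ℂ, ‖ω^e (star (η, x) * (μ, a))‖² ≤ Γ · (ω^e (star (μ, a) * (μ, a))).re, where ω^e is the extension of ω with parameter γ and elements of the unitization are written as pairs (scalar part, algebra part). -/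
set_option maxHeartbeats 1000000 in
/-- **The key estimate in the proof of Proposition 3.3.** For a hermitian positive
linear functional `ω` satisfying (HB) with bound `γ`, given `x ∈ A`, `η ∈ ℂ`, an (L.3)
constant `γₓ` for `x`, a bound `p` on the sesquilinear values against `x` and an (EHB)
constant `ζ`, the squared modulus of `ω^e((η,x)* · (μ,a))` is bounded by
`Γ · ω^e((μ,a)* · (μ,a))` where `Γ = max (2K²) (‖η‖²γ)`. -/
theorem extension_key_estimate {A : Type*} [NonUnitalRing A] [StarRing A] [Module ℂ A]
    [StarModule ℂ A] [SMulCommClass ℂ A A] [IsScalarTower ℂ A A]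
    (ω : A →ₗ[ℂ] ℂ)
    (hpos : ∀ a : A, (ω (star a * a)).im = 0 ∧ 0 ≤ (ω (star a * a)).re)
    (hherm : ∀ y : A, ω (star y) = starRingEnd ℂ (ω y))
    (γ : ℝ) (hγ : 0 < γ)
    (hHB : ∀ a : A, ‖ω a‖ ^ 2 ≤ γ * (ω (star a * a)).re)
    (x : A) (η : ℂ)
    (γx : ℝ) (hγx : 0 < γx)
    (hL3x : ∀ a : A, ‖ω (star x * a)‖ ≤ γx * Real.sqrt (ω (star a * a)).re)
    (p : ℝ) (hp : 0 ≤ p)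
    (hpx : ∀ a : A, ‖ω (star x * a)‖ ^ 2 ≤ p * (ω (star a * a)).re)
    (ζ : ℝ) (hζ : 0 < ζ)
    (hEHBx : ‖ω (star x)‖ ≤ ζ * Real.sqrt p)
    (K Γ : ℝ)
    (hK : K = max (γx + ‖η‖ * Real.sqrt γ)
      (ζ * Real.sqrt p / Real.sqrt γ + ‖η‖ * Real.sqrt γ))
    (hΓ : Γ = max (2 * K ^ 2) (‖η‖ ^ 2 * γ)) :
    ∀ (a : A) (μ : ℂ),
      ‖omegaExt ω γ (star (Unitization.inl η + (x : Unitization ℂ A)) *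
          (Unitization.inl μ + (a : Unitization ℂ A)))‖ ^ 2 ≤
        Γ * (omegaExt ω γ (star (Unitization.inl μ + (a : Unitization ℂ A)) *
          (Unitization.inl μ + (a : Unitization ℂ A)))).re := by
  -- value of the extension on star Z * W
  have hcomp : ∀ (Z W : Unitization ℂ A), omegaExt ω γ (star Z * W) =
      (starRingEnd ℂ Z.fst) * ω W.snd + W.fst * ω (star Z.snd) +
        ω (star Z.snd * W.snd) + (starRingEnd ℂ Z.fst) * W.fst * γ := by
    intro Z W
    simp [omegaExt, Unitization.fst_mul, Unitization.snd_mul, Unitization.fst_star,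
      Unitization.snd_star, map_add, map_smul, smul_eq_mul]
  -- real part on the diagonal
  have hdiag : ∀ (Z : Unitization ℂ A), (omegaExt ω γ (star Z * Z)).re =
      2 * ((starRingEnd ℂ Z.fst) * ω Z.snd).re + (ω (star Z.snd * Z.snd)).re +
        ‖Z.fst‖ ^ 2 * γ := by
    intro Z
    rw [hcomp Z Z, hherm]
    have h1 : Z.fst * (starRingEnd ℂ) (ω Z.snd) =
        starRingEnd ℂ ((starRingEnd ℂ Z.fst) * ω Z.snd) := by
      rw [map_mul]; simp
    have h2 : (starRingEnd ℂ Z.fst) * Z.fst * (γ : ℂ) = ((‖Z.fst‖ ^ 2 * γ : ℝ) : ℂ) := by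
      rw [Complex.conj_mul']
      push_cast
      ring
    rw [h1, h2]
    simp only [Complex.add_re, Complex.ofReal_re, Complex.conj_re]
    ring
  -- nonnegativity on the diagonal
  have hnonneg : ∀ (Z : Unitization ℂ A), 0 ≤ (omegaExt ω γ (star Z * Z)).re := by
    intro Z
    rw [hdiag Z]
    have hre : -(‖Z.fst‖ * ‖ω Z.snd‖) ≤ ((starRingEnd ℂ Z.fst) * ω Z.snd).re := by
      have := Complex.abs_re_le_norm ((starRingEnd ℂ Z.fst) * ω Z.snd)
      have habs : ‖(starRingEnd ℂ Z.fst) * ω Z.snd‖ = ‖Z.fst‖ * ‖ω Z.snd‖ := by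
        rw [norm_mul]
        simp
      rw [habs] at this
      linarith [neg_abs_le (((starRingEnd ℂ Z.fst) * ω Z.snd).re)]
    have hHBz := hHB Z.snd
    have hr := (hpos Z.snd).2
    nlinarith [sq_nonneg (‖ω Z.snd‖ - ‖Z.fst‖ * γ), norm_nonneg (ω Z.snd),
      norm_nonneg Z.fst, mul_nonneg (norm_nonneg Z.fst) (norm_nonneg (ω Z.snd)), hγ.le]
  -- omegaExt is additive and ℂ-homogeneous
  have hadd : ∀ (V W : Unitization ℂ A), omegaExt ω γ (V + W) =
      omegaExt ω γ V + omegaExt ω γ W := by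
    intro V W
    simp [omegaExt]
    ring
  have hsmul : ∀ (c : ℂ) (V : Unitization ℂ A), omegaExt ω γ (c • V) =
      c * omegaExt ω γ V := by
    intro c V
    simp [omegaExt, smul_eq_mul]
    ring
  have hstar : ∀ (V : Unitization ℂ A), omegaExt ω γ (star V) =
      starRingEnd ℂ (omegaExt ω γ V) := by
    intro V
    simp [omegaExt, Unitization.snd_star, Unitization.fst_star, hherm, map_add, map_mul,
      Complex.conj_ofReal]
  -- the sesquilinear form as a pre-inner-product core
  letI core : PreInnerProductSpace.Core ℂ (Unitization ℂ A) :=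
    { inner := fun Z W => omegaExt ω γ (star Z * W)
      conj_inner_symm := by
        intro Z W
        show starRingEnd ℂ (omegaExt ω γ (star W * Z)) = omegaExt ω γ (star Z * W)
        have h : star (star W * Z) = star Z * W := by rw [star_mul, star_star]
        rw [← h, hstar]
      re_inner_nonneg := fun Z => by
        simpa only [RCLike.re_to_complex] using hnonneg Z
      add_left := by
        intro Z W V
        show omegaExt ω γ (star (Z + W) * V) =
          omegaExt ω γ (star Z * V) + omegaExt ω γ (star W * V)
        have h : star (Z + W) * V = star Z * V + star W * V := by
          rw [star_add, add_mul]
        rw [h, hadd]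
      smul_left := by
        intro Z W c
        show omegaExt ω γ (star (c • Z) * W) = starRingEnd ℂ c * omegaExt ω γ (star Z * W)
        have h : star (c • Z) * W = starRingEnd ℂ c • (star Z * W) := by
          rw [star_smul, smul_mul_assoc]
          rfl
        rw [h, hsmul] }
  intro a μ
  set X : Unitization ℂ A := Unitization.inl η + (x : Unitization ℂ A) with hX
  set Y : Unitization ℂ A := Unitization.inl μ + (a : Unitization ℂ A) with hY
  have hXf : X.fst = η := by simp [hX]
  have hXs : X.snd = x := by simp [hX]
  -- Cauchy-Schwarz
  have cs0 := InnerProductSpace.Core.inner_mul_inner_self_le (𝕜 := ℂ)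
    (F := Unitization ℂ A) X Y
  have cs : ‖omegaExt ω γ (star X * Y)‖ * ‖omegaExt ω γ (star Y * X)‖ ≤
      (omegaExt ω γ (star X * X)).re * (omegaExt ω γ (star Y * Y)).re := by
    exact cs0
  have hsymnorm : ‖omegaExt ω γ (star Y * X)‖ = ‖omegaExt ω γ (star X * Y)‖ := by
    have : star (star Y * X) = star X * Y := by rw [star_mul, star_star]
    rw [← this, hstar]
    exact (RCLike.norm_conj _).symm
  rw [hsymnorm] at cs
  -- bound on the diagonal value at X
  have hrx0 := (hpos x).2
  set rx : ℝ := (ω (star x * x)).re with hrx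
  have hxnorm : ‖ω (star x * x)‖ = rx := by
    have him := (hpos x).1
    have h2 : ‖ω (star x * x)‖ ^ 2 = rx ^ 2 := by
      rw [Complex.sq_norm, Complex.normSq_apply, him, ← hrx]
      ring
    nlinarith [norm_nonneg (ω (star x * x))]
  have hL3 : rx ≤ γx * Real.sqrt rx := by
    have := hL3x x
    rwa [hxnorm] at this
  have hsq : Real.sqrt rx ≤ γx := by
    nlinarith [Real.sq_sqrt hrx0, Real.sqrt_nonneg rx]
  have hrx_le : rx ≤ γx ^ 2 := by
    nlinarith [Real.sq_sqrt hrx0, Real.sqrt_nonneg rx]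
  have hωx : ‖ω x‖ ≤ γx * Real.sqrt γ := by
    have h2 : ‖ω x‖ ^ 2 ≤ (γx * Real.sqrt γ) ^ 2 := by
      have he : (γx * Real.sqrt γ) ^ 2 = γx ^ 2 * γ := by
        rw [mul_pow, Real.sq_sqrt hγ.le]
      calc ‖ω x‖ ^ 2 ≤ γ * rx := hHB x
        _ ≤ γ * γx ^ 2 := by nlinarith
        _ = (γx * Real.sqrt γ) ^ 2 := by rw [he]; ring
    have h3 := Real.sqrt_le_sqrt h2
    rwa [Real.sqrt_sq (norm_nonneg _), Real.sqrt_sq (by positivity)] at h3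
  have hre : ((starRingEnd ℂ η) * ω x).re ≤ ‖η‖ * ‖ω x‖ := by
    have h1 := Complex.abs_re_le_norm ((starRingEnd ℂ η) * ω x)
    have habs : ‖(starRingEnd ℂ η) * ω x‖ = ‖η‖ * ‖ω x‖ := by
      rw [norm_mul]
      simp
    rw [habs] at h1
    linarith [le_abs_self (((starRingEnd ℂ η) * ω x).re)]
  have hXX : (omegaExt ω γ (star X * X)).re ≤ K ^ 2 := by
    have hd := hdiag X
    rw [hXf, hXs] at hd
    have hKge : γx + ‖η‖ * Real.sqrt γ ≤ K := hK ▸ le_max_left _ _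
    have hb : (omegaExt ω γ (star X * X)).re ≤ (γx + ‖η‖ * Real.sqrt γ) ^ 2 := by
      rw [hd]
      nlinarith [Real.sq_sqrt hγ.le, norm_nonneg η, norm_nonneg (ω x),
        mul_le_mul_of_nonneg_left hωx (norm_nonneg η), hre, hrx_le]
    have hbase : 0 ≤ γx + ‖η‖ * Real.sqrt γ := by positivity
    calc (omegaExt ω γ (star X * X)).re ≤ (γx + ‖η‖ * Real.sqrt γ) ^ 2 := hb
      _ ≤ K ^ 2 := by nlinarith
  have hT : 0 ≤ (omegaExt ω γ (star Y * Y)).re := hnonneg Y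
  have hKΓ : K ^ 2 ≤ Γ := by
    have : 2 * K ^ 2 ≤ Γ := hΓ ▸ le_max_left _ _
    nlinarith [sq_nonneg K]
  calc ‖omegaExt ω γ (star X * Y)‖ ^ 2
      = ‖omegaExt ω γ (star X * Y)‖ * ‖omegaExt ω γ (star X * Y)‖ := by ring
    _ ≤ (omegaExt ω γ (star X * X)).re * (omegaExt ω γ (star Y * Y)).re := cs
    _ ≤ K ^ 2 * (omegaExt ω γ (star Y * Y)).re := mul_le_mul_of_nonneg_right hXX hT
    _ ≤ Γ * (omegaExt ω γ (star Y * Y)).re := mul_le_mul_of_nonneg_right hKΓ hT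
end

section
/- Let ω be a hermitian positive linear functional on a non-unital complex *-algebra A. If ω satisfies (EHB), i.e. there exists ζ > 0 such that for every x ∈ A and every real p ≥ 0 satisfying ‖ω (star x * a)‖² ≤ p · (ω (star a * a)).re for all a ∈ A, one has ‖ω (star x)‖ ≤ ζ · Real.sqrt p, then ω satisfies (HB): there exists δ > 0 such that ‖ω a‖² ≤ δ · (ω (star a * a)).re for every a ∈ A (indeed δ = ζ² works). -/
/-- **(EHB) implies (HB).** If a hermitian positive linear functional `ω` on a
non-unital complex *-algebra satisfies (EHB), then it satisfies (HB) with `δ = ζ²`. -/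
theorem ehb_implies_hb {A : Type*} [NonUnitalRing A] [StarRing A] [Module ℂ A]
    [StarModule ℂ A] [SMulCommClass ℂ A A] [IsScalarTower ℂ A A]
    (ω : A →ₗ[ℂ] ℂ)
    (hpos : ∀ a : A, (ω (star a * a)).im = 0 ∧ 0 ≤ (ω (star a * a)).re)
    (hherm : ∀ x : A, ω (star x) = starRingEnd ℂ (ω x))
    (ζ : ℝ) (hζ : 0 < ζ)
    (hEHB : ∀ (x : A) (p : ℝ), 0 ≤ p →
      (∀ a : A, ‖ω (star x * a)‖ ^ 2 ≤ p * (ω (star a * a)).re) →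
      ‖ω (star x)‖ ≤ ζ * Real.sqrt p) :
    ∃ δ > 0, δ = ζ ^ 2 ∧ ∀ a : A, ‖ω a‖ ^ 2 ≤ δ * (ω (star a * a)).re := by
  refine ⟨ζ ^ 2, by positivity, rfl, ?_⟩
  intro a
  have hcs : ∀ b : A, ‖ω (star a * b)‖ ^ 2 ≤ (ω (star a * a)).re * (ω (star b * b)).re := by
    intro b
    set α := ω (star a * b) with hα
    have herm2 : ω (star b * a) = starRingEnd ℂ α := by
      rw [hα, ← hherm]
      congr 1
      simp [star_mul]
    have hnormsq : starRingEnd ℂ α * α = (‖α‖ ^ 2 : ℝ) := by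
      rw [mul_comm, Complex.mul_conj, Complex.normSq_eq_norm_sq]
    have key : ∀ s : ℝ, 0 ≤ (ω (star a * a)).re - 2 * s * ‖α‖ ^ 2
        + s ^ 2 * ‖α‖ ^ 2 * (ω (star b * b)).re := by
      intro s
      have h := (hpos (a + (-(s : ℂ) * starRingEnd ℂ α) • b)).2
      set t : ℂ := -(s : ℂ) * starRingEnd ℂ α with ht
      have expand : ω (star (a + t • b) * (a + t • b)) =
          ω (star a * a) + t * α + starRingEnd ℂ t * starRingEnd ℂ α
            + (starRingEnd ℂ t * t) * ω (star b * b) := by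
        rw [star_add, star_smul, add_mul, mul_add, mul_add, map_add, map_add, map_add,
          smul_mul_assoc, smul_mul_assoc, mul_smul_comm, mul_smul_comm,
          map_smul, map_smul, map_smul, map_smul, herm2, ← hα]
        simp [smul_eq_mul, smul_smul]
        ring
      rw [expand] at h
      have hnormsq' : α * starRingEnd ℂ α = (‖α‖ ^ 2 : ℝ) := by
        rw [mul_comm]; exact hnormsq
      have e1 : t * α = ((-(s * ‖α‖ ^ 2) : ℝ) : ℂ) := by
        rw [ht, mul_assoc, hnormsq]
        push_cast
        ring
      have e2 : starRingEnd ℂ t * starRingEnd ℂ α = ((-(s * ‖α‖ ^ 2) : ℝ) : ℂ) := by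
        rw [ht, map_mul, map_neg, Complex.conj_ofReal, Complex.conj_conj, mul_assoc, hnormsq']
        push_cast
        ring
      have e3 : starRingEnd ℂ t * t = ((s ^ 2 * ‖α‖ ^ 2 : ℝ) : ℂ) := by
        rw [ht, map_mul, map_neg, Complex.conj_ofReal, Complex.conj_conj]
        have : (-(s:ℂ) * α) * (-(s:ℂ) * starRingEnd ℂ α) = (s:ℂ)^2 * (starRingEnd ℂ α * α) := by
          ring
        rw [this, hnormsq]
        push_cast
        ring
      rw [e1, e2, e3] at h
      simp only [Complex.add_re, Complex.mul_re, Complex.ofReal_re, Complex.ofReal_im,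
        (hpos b).1, mul_zero, zero_mul, sub_zero] at h
      linarith
    rcases eq_or_lt_of_le (hpos b).2 with hb | hb
    · by_cases hz : ‖α‖ ^ 2 = 0
      · rw [hz, ← hb]
        nlinarith [(hpos a).2]
      · have hzpos : 0 < ‖α‖ ^ 2 := lt_of_le_of_ne (by positivity) (Ne.symm hz)
        have h1 := key (((ω (star a * a)).re + 1) / (2 * ‖α‖ ^ 2))
        rw [← hb] at h1
        have e : (((ω (star a * a)).re + 1) / (2 * ‖α‖ ^ 2)) * (2 * ‖α‖ ^ 2)
            = (ω (star a * a)).re + 1 := div_mul_cancel₀ _ (by positivity)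
        nlinarith [h1, e]
    · have h1 := key (1 / (ω (star b * b)).re)
      have hBne := hb.ne'
      have e : (ω (star a * a)).re - 2 * (1 / (ω (star b * b)).re) * ‖α‖ ^ 2
          + (1 / (ω (star b * b)).re) ^ 2 * ‖α‖ ^ 2 * (ω (star b * b)).re
          = (ω (star a * a)).re - ‖α‖ ^ 2 / (ω (star b * b)).re := by
        field_simp
        ring
      rw [e] at h1
      have h2 : ‖α‖ ^ 2 / (ω (star b * b)).re ≤ (ω (star a * a)).re := by linarith
      calc ‖α‖ ^ 2 = ‖α‖ ^ 2 / (ω (star b * b)).re * (ω (star b * b)).re := by field_simp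
        _ ≤ (ω (star a * a)).re * (ω (star b * b)).re :=
            mul_le_mul_of_nonneg_right h2 hb.le
  have hp : 0 ≤ (ω (star a * a)).re := (hpos a).2
  have h := hEHB a ((ω (star a * a)).re) hp hcs
  have hna : ‖ω a‖ = ‖ω (star a)‖ := by rw [hherm]; simp
  rw [hna]
  calc ‖ω (star a)‖ ^ 2 ≤ (ζ * Real.sqrt ((ω (star a * a)).re)) ^ 2 := by
        apply pow_le_pow_left₀ (norm_nonneg _) h
    _ = ζ ^ 2 * (ω (star a * a)).re := by
        rw [mul_pow, Real.sq_sqrt hp]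
end

section
/- Let ω be a positive linear functional on a non-unital complex *-algebra A. Then for every b ∈ A, sSup { t : ℝ | ∃ a ∈ A, ω (star a * a) = 1 ∧ t = ‖ω (star b * a)‖² } = (ω (star b * b)).re, where sSup denotes the supremum of a set of reals with the convention sSup ∅ = 0. (In particular the set is bounded above by (ω (star b * b)).re, and if (ω (star b * b)).re > 0 the value is attained at a = ((ω (star b * b)).re)^{-1/2} • b.) -/
/-- **Lemma 3.2 ((HB) = (EHB) on `A₀`).** For a positive linear functional `ω` on a
non-unital complex *-algebra and any `b`, the supremum
`p_b(ω) = sup { |ω(b*a)|² : ω(a*a) = 1 }` equals `ω(b*b)`. -/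
theorem pOmega_eq_of_mem {A : Type*} [NonUnitalRing A] [StarRing A] [Module ℂ A]
    [StarModule ℂ A] [SMulCommClass ℂ A A] [IsScalarTower ℂ A A]
    (ω : A →ₗ[ℂ] ℂ)
    (hpos : ∀ a : A, (ω (star a * a)).im = 0 ∧ 0 ≤ (ω (star a * a)).re)
    (b : A) :
    sSup {t : ℝ | ∃ a : A, ω (star a * a) = 1 ∧ t = ‖ω (star b * a)‖ ^ 2}
      = (ω (star b * b)).re := by
  -- Hermitian symmetry of the sesquilinear form
  have hsymm : ∀ x y : A, ω (star y * x) = starRingEnd ℂ (ω (star x * y)) := by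
    intro x y
    have h1 : (ω (star (x + y) * (x + y))).im = 0 := (hpos (x + y)).1
    have h2 : (ω (star (x + Complex.I • y) * (x + Complex.I • y))).im = 0 :=
      (hpos (x + Complex.I • y)).1
    have e1 : ω (star (x + y) * (x + y)) =
        ω (star x * x) + ω (star x * y) + ω (star y * x) + ω (star y * y) := by
      simp only [star_add, add_mul, mul_add, map_add]; ring
    have e2 : ω (star (x + Complex.I • y) * (x + Complex.I • y)) =
        ω (star x * x) + Complex.I * ω (star x * y) - Complex.I * ω (star y * x)
          + ω (star y * y) := by
      simp only [star_add, star_smul, add_mul, mul_add, smul_mul_assoc, mul_smul_comm,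
        map_add, map_smul, smul_eq_mul, smul_smul, RCLike.star_def, Complex.conj_I]
      ring_nf
      rw [Complex.I_sq]
      ring
    rw [e1] at h1
    rw [e2] at h2
    have hx := (hpos x).1
    have hy := (hpos y).1
    apply Complex.ext <;>
      simp only [Complex.add_im, Complex.sub_im, Complex.mul_im, Complex.I_re, Complex.I_im,
        Complex.conj_re, Complex.conj_im] at h1 h2 ⊢ <;> linarith
  -- expansion of the quadratic form
  have expand : ∀ (x y : A) (t : ℂ), ω (star (x - t • y) * (x - t • y)) =
      ω (star x * x) - t * ω (star x * y) - (starRingEnd ℂ t) * ω (star y * x)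
        + ((starRingEnd ℂ t) * t) * ω (star y * y) := by
    intro x y t
    simp only [star_sub, star_smul, sub_mul, mul_sub, smul_mul_assoc, mul_smul_comm,
      map_sub, map_add, map_smul, smul_eq_mul, smul_smul, RCLike.star_def]
    ring
  set B := (ω (star b * b)).re with hB
  have hBnn : 0 ≤ B := (hpos b).2
  have hBval : ω (star b * b) = (B : ℂ) := by
    apply Complex.ext
    · simp [hB]
    · simpa using (hpos b).1
  -- Cauchy–Schwarz
  have key : ∀ a : A, ω (star a * a) = 1 → ‖ω (star b * a)‖ ^ 2 ≤ B := by
    intro a ha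
    set u := ω (star b * a) with hu
    have hconj : ω (star a * b) = starRingEnd ℂ u := hsymm b a
    have hq : ∀ t : ℂ, 0 ≤ (1 - t * starRingEnd ℂ u - starRingEnd ℂ t * u
        + (starRingEnd ℂ t * t) * (B : ℂ)).re := by
      intro t
      have := (hpos (a - t • b)).2
      rwa [expand a b t, ha, hconj, hu, hBval] at this
    have hreal : ∀ s : ℝ, 0 ≤ 1 - 2 * s * Complex.normSq u
        + s ^ 2 * Complex.normSq u * B := by
      intro s
      have hs := hq ((s : ℂ) * u)
      have hval : (1 - (s : ℂ) * u * starRingEnd ℂ u - starRingEnd ℂ ((s : ℂ) * u) * u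
          + (starRingEnd ℂ ((s : ℂ) * u) * ((s : ℂ) * u)) * (B : ℂ)) =
          ((1 - 2 * s * Complex.normSq u + s ^ 2 * Complex.normSq u * B : ℝ) : ℂ) := by
        rw [map_mul, Complex.conj_ofReal]
        have h1 : u * starRingEnd ℂ u = (Complex.normSq u : ℂ) := Complex.mul_conj u
        have h2 : starRingEnd ℂ u * u = (Complex.normSq u : ℂ) := by
          rw [mul_comm]; exact h1
        push_cast
        linear_combination (-2 * (s : ℂ) + (s : ℂ) ^ 2 * (B : ℂ)) * h1
          + ((s : ℂ) ^ 2 * (B : ℂ) * 0) * h2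
      rw [hval, Complex.ofReal_re] at hs
      exact hs
    have hnormsq : ‖u‖ ^ 2 = Complex.normSq u := by
      exact (Complex.normSq_eq_norm_sq u).symm
    rw [hnormsq]
    rcases eq_or_lt_of_le hBnn with h0 | hBpos
    · -- B = 0
      rw [← h0]
      by_contra hlt
      push_neg at hlt
      have hs := hreal (Complex.normSq u)⁻¹
      rw [← h0] at hs
      have hc : (Complex.normSq u)⁻¹ * Complex.normSq u = 1 :=
        inv_mul_cancel₀ (ne_of_gt hlt)
      nlinarith
    · -- B > 0
      have hs := hreal B⁻¹
      have heq : B⁻¹ ^ 2 * Complex.normSq u * B = B⁻¹ * Complex.normSq u := by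
        field_simp
      rw [heq] at hs
      have h1 : B⁻¹ * Complex.normSq u ≤ 1 := by linarith
      have h2 := mul_le_mul_of_nonneg_left h1 hBnn
      rw [mul_one, ← mul_assoc, mul_inv_cancel₀ (ne_of_gt hBpos), one_mul] at h2
      exact h2
  apply le_antisymm
  · exact Real.sSup_le (by rintro t ⟨a, ha, rfl⟩; exact key a ha) hBnn
  · rcases eq_or_lt_of_le hBnn with h0 | hBpos
    · rw [← h0]
      exact Real.sSup_nonneg (by rintro t ⟨a, ha, rfl⟩; positivity)
    · apply le_csSup ⟨B, by rintro t ⟨a, ha, rfl⟩; exact key a ha⟩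
      have hsB : Real.sqrt B ≠ 0 := by positivity
      have hsq : Real.sqrt B * Real.sqrt B = B := Real.mul_self_sqrt hBnn
      refine ⟨(((Real.sqrt B)⁻¹ : ℝ) : ℂ) • b, ?_, ?_⟩
      · rw [star_smul, smul_mul_assoc, mul_smul_comm, map_smul, map_smul, hBval]
        simp only [RCLike.star_def, Complex.conj_ofReal, smul_eq_mul]
        rw [← Complex.ofReal_mul, ← Complex.ofReal_mul]
        norm_cast
        rw [← mul_assoc, ← mul_inv, hsq]
        exact inv_mul_cancel₀ (ne_of_gt hBpos)
      · have hinv : (Real.sqrt B)⁻¹ * B = Real.sqrt B := by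
          rw [← hsq]; field_simp; rw [Real.sqrt_sq (Real.sqrt_nonneg _)]
        rw [mul_smul_comm, map_smul, smul_eq_mul, hBval, ← Complex.ofReal_mul,
          Complex.norm_real, Real.norm_eq_abs, sq_abs, hinv, Real.sq_sqrt hBnn]
end

section
/- Let ω be a hermitian positive linear functional on a non-unital complex *-algebra A, and let γ > 0 satisfy ‖ω a‖² ≤ γ · (ω (star a * a)).re for all a ∈ A. Then the extension ω^e with parameter γ is hermitian on the unitization, i.e. ω^e (star X) = conj (ω^e X) for every X in Unitization ℂ A, and positive, i.e. for every X in Unitization ℂ A the value ω^e (star X * X) has zero imaginary part and nonnegative real part. -/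
/-- If `ω` is a hermitian positive linear functional on a non-unital complex *-algebra
satisfying (HB) with Hilbert bound `γ`, then the extension `ω^e` with parameter `γ`
is hermitian and positive on the unitization. -/
theorem extension_hermitian_positive {A : Type*} [NonUnitalRing A] [StarRing A]
    [Module ℂ A] [StarModule ℂ A] [SMulCommClass ℂ A A] [IsScalarTower ℂ A A]
    (ω : A →ₗ[ℂ] ℂ)
    (hpos : ∀ a : A, (ω (star a * a)).im = 0 ∧ 0 ≤ (ω (star a * a)).re)
    (hherm : ∀ x : A, ω (star x) = starRingEnd ℂ (ω x))
    (γ : ℝ) (hγ : 0 < γ)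
    (hHB : ∀ a : A, ‖ω a‖ ^ 2 ≤ γ * (ω (star a * a)).re) :
    (∀ X : Unitization ℂ A, omegaExt ω γ (star X) = starRingEnd ℂ (omegaExt ω γ X)) ∧
    (∀ X : Unitization ℂ A, (omegaExt ω γ (star X * X)).im = 0 ∧
      0 ≤ (omegaExt ω γ (star X * X)).re) := by
  constructor
  · intro X
    simp only [omegaExt, Unitization.fst_star, Unitization.snd_star, hherm, map_add, map_mul,
      Complex.conj_conj, Complex.star_def]
    rw [show ((γ : ℂ)) = ((γ : ℝ) : ℂ) from rfl]
    rw [Complex.conj_ofReal]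
  · intro X
    have key : omegaExt ω γ (star X * X) =
        (starRingEnd ℂ) X.fst * ω X.snd + X.fst * (starRingEnd ℂ) (ω X.snd) +
          ω (star X.snd * X.snd) + (starRingEnd ℂ) X.fst * X.fst * γ := by
      simp only [omegaExt, Unitization.fst_mul, Unitization.snd_mul, Unitization.fst_star,
        Unitization.snd_star, map_add, LinearMap.map_smul, smul_eq_mul, hherm, Complex.star_def]
    obtain ⟨ht1, ht2⟩ := hpos X.snd
    have hb := hHB X.snd
    constructor
    · rw [key]
      simp only [Complex.add_im, Complex.mul_im, Complex.conj_re, Complex.conj_im, ht1,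
        Complex.ofReal_im, Complex.ofReal_re, mul_zero, add_zero]
      ring
    · have hre : (omegaExt ω γ (star X * X)).re =
          2 * ((starRingEnd ℂ) X.fst * ω X.snd).re + (ω (star X.snd * X.snd)).re +
            Complex.normSq X.fst * γ := by
        rw [key]
        simp [Complex.add_re, Complex.mul_re, Complex.conj_re, Complex.conj_im,
          Complex.normSq_apply]
        ring
      rw [hre]
      have h1 : -(‖X.fst‖ * ‖ω X.snd‖) ≤
          ((starRingEnd ℂ) X.fst * ω X.snd).re := by
        have h2 : |((starRingEnd ℂ) X.fst * ω X.snd).re| ≤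
            ‖X.fst‖ * ‖ω X.snd‖ := by
          simpa [map_mul] using Complex.abs_re_le_norm ((starRingEnd ℂ) X.fst * ω X.snd)
        linarith [neg_abs_le ((starRingEnd ℂ) X.fst * ω X.snd).re]
      have hns : Complex.normSq X.fst = ‖X.fst‖ ^ 2 := (Complex.sq_norm X.fst).symm
      have ha2 : ‖ω X.snd‖ ^ 2 ≤ γ * (ω (star X.snd * X.snd)).re := by
        simpa using hb
      rw [hns]
      nlinarith [sq_nonneg (γ * ‖X.fst‖ - ‖ω X.snd‖),
        norm_nonneg X.fst, norm_nonneg (ω X.snd), hγ]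
end

section
/- Let A be a non-unital C*-algebra and ω : A →L[ℂ] ℂ a continuous linear functional that is positive, i.e. for every a ∈ A the value ω (star a * a) has zero imaginary part and nonnegative real part. Then ω is Hilbert bounded with bound ‖ω‖: for every a ∈ A, ‖ω a‖² ≤ ‖ω‖ · (ω (star a * a)).re. -/
open scoped ComplexConjugate Topology
open Filter

section hilbertBoundedAux

variable {A : Type*} [NonUnitalCStarAlgebra A]

private lemma expand_aux (ω : A →L[ℂ] ℂ) (t : ℂ) (x y : A) :
    ω (star (x + t • y) * (x + t • y)) =
      ω (star x * x) + t * ω (star x * y) + conj t * ω (star y * x)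
        + conj t * t * ω (star y * y) := by
  simp only [star_add, star_smul, add_mul, mul_add, smul_mul_assoc, mul_smul_comm,
    map_add, map_smul, smul_eq_mul, RCLike.star_def, smul_smul]
  ring

private lemma herm_aux (ω : A →L[ℂ] ℂ)
    (hpos : ∀ a : A, (ω (star a * a)).im = 0 ∧ 0 ≤ (ω (star a * a)).re)
    (x y : A) : ω (star y * x) = conj (ω (star x * y)) := by
  have h1 := (hpos (x + (1 : ℂ) • y)).1
  have h2 := (hpos (x + Complex.I • y)).1
  rw [expand_aux] at h1 h2
  have hx := (hpos x).1
  have hy := (hpos y).1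
  set α := ω (star x * y)
  set β := ω (star y * x)
  simp only [Complex.add_im, Complex.mul_im, Complex.one_re, Complex.one_im, map_one,
    Complex.I_re, Complex.I_im, Complex.conj_I, Complex.neg_re, Complex.neg_im,
    hx, hy] at h1 h2
  apply Complex.ext
  · simp only [Complex.conj_re]; nlinarith [h2]
  · simp only [Complex.conj_im]; nlinarith [h1]

private lemma cs_aux_s8 (ω : A →L[ℂ] ℂ)
    (hpos : ∀ a : A, (ω (star a * a)).im = 0 ∧ 0 ≤ (ω (star a * a)).re)
    (x y : A) :
    ‖ω (star x * y)‖ ^ 2 ≤ (ω (star x * x)).re * (ω (star y * y)).re := by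
  set α := ω (star x * y) with hα
  set p := (ω (star x * x)).re with hp
  set q := (ω (star y * y)).re with hq
  have hβ : ω (star y * x) = conj α := herm_aux ω hpos x y
  have hyyc : ω (star y * y) = (q : ℂ) := Complex.ext rfl (hpos y).1
  have habs : ‖α‖ ^ 2 = α.re ^ 2 + α.im ^ 2 := by
    rw [Complex.sq_norm, Complex.normSq_apply]; ring
  have key : ∀ r : ℝ, 0 ≤ (q * ‖α‖ ^ 2) * (r * r) + (2 * ‖α‖ ^ 2) * r + p := by
    intro r
    have h := (hpos (x + ((r : ℂ) * conj α) • y)).2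
    rw [expand_aux, hβ, hyyc] at h
    simp only [Complex.add_re, Complex.mul_re, Complex.mul_im, Complex.conj_re,
      Complex.conj_im, Complex.ofReal_re, Complex.ofReal_im] at h
    rw [← hα, ← hp] at h
    rw [habs]
    nlinarith [h]
  have hd := discrim_le_zero key
  have hp0 : 0 ≤ p := (hpos x).2
  have hq0 : 0 ≤ q := (hpos y).2
  rw [discrim] at hd
  rcases eq_or_lt_of_le (norm_nonneg α) with h0 | h0
  · simp [← h0]; positivity
  · nlinarith [hd, pow_pos h0 2]

private lemma approx_aux (a : A) (c : ℝ) (hc : 0 < c) :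
    ∃ e : A, IsSelfAdjoint e ∧ ‖e‖ ≤ 1 ∧ ‖e * a - a‖ ^ 2 ≤ 1 / (4 * c) := by
  set b : A := a * star a with hb
  have hbsa : IsSelfAdjoint b := IsSelfAdjoint.mul_star_self a
  set f : ℝ → ℝ := fun t => c * |t| / (1 + c * |t|) with hf
  have hfc : Continuous f := by
    apply Continuous.div (by fun_prop) (by fun_prop)
    intro t; positivity
  have hf0 : f 0 = 0 := by simp [hf]
  have hfnn : ∀ t, 0 ≤ f t := fun t => by rw [hf]; positivity
  have hfle : ∀ t, f t ≤ 1 := fun t => by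
    rw [hf]
    exact div_le_one_of_le₀ (by nlinarith [abs_nonneg t]) (by positivity)
  set e : A := cfcₙ f b with he
  have hesa : IsSelfAdjoint e := cfcₙ_predicate f b
  refine ⟨e, hesa, ?_, ?_⟩
  · exact norm_cfcₙ_le fun t _ => by
      rw [Real.norm_eq_abs, abs_of_nonneg (hfnn t)]; exact hfle t
  · have hid : cfcₙ (id : ℝ → ℝ) b = b := cfcₙ_id ℝ b hbsa
    have h1 : cfcₙ (fun t => f t * id t) b = e * b := by
      rw [cfcₙ_mul f id b hfc.continuousOn hf0 continuousOn_id rfl, hid, he]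
    have h2 : cfcₙ (fun t => id t * f t) b = b * e := by
      rw [cfcₙ_mul id f b continuousOn_id rfl hfc.continuousOn hf0, hid, he]
    have h3 : cfcₙ (fun t => (f t * id t) * f t) b = e * b * e := by
      rw [cfcₙ_mul (fun t => f t * id t) f b (by fun_prop) (by simp [hf0])
        hfc.continuousOn hf0, h1, he]
    have h4 : cfcₙ (fun t => (f t * id t) * f t - f t * id t - id t * f t + id t) b
        = e * b * e - e * b - b * e + b := by
      rw [cfcₙ_add _ id b (by fun_prop) (by simp [hf0]) continuousOn_id rfl,
        cfcₙ_sub _ _ b (by fun_prop) (by simp [hf0]) (by fun_prop) (by simp [hf0]),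
        cfcₙ_sub _ _ b (by fun_prop) (by simp [hf0]) (by fun_prop) (by simp [hf0]),
        h1, h2, h3, hid]
    have hprod : (e * a - a) * star (e * a - a) = e * b * e - e * b - b * e + b := by
      rw [star_sub, star_mul, hesa.star_eq, hb]
      noncomm_ring
    have hbound : ‖(e * a - a) * star (e * a - a)‖ ≤ 1 / (4 * c) := by
      rw [hprod, ← h4]
      refine norm_cfcₙ_le fun t _ => ?_
      have hd : (0:ℝ) < 1 + c * |t| := by positivity
      have heq : f t * id t * f t - f t * id t - id t * f t + id t
          = t / (1 + c * |t|) ^ 2 := by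
        simp only [hf, id_eq]
        field_simp
        ring
      rw [heq, Real.norm_eq_abs, abs_div,
        abs_of_nonneg (by positivity : (0:ℝ) ≤ (1 + c * |t|) ^ 2)]
      rw [div_le_div_iff₀ (by positivity) (by positivity)]
      nlinarith [sq_nonneg (1 - c * |t|), abs_nonneg t]
    calc ‖e * a - a‖ ^ 2 = ‖(e * a - a) * star (e * a - a)‖ := by
          rw [CStarRing.norm_self_mul_star, sq]
      _ ≤ 1 / (4 * c) := hbound

end hilbertBoundedAux

/-- **Positive functionals on non-unital C*-algebras are Hilbert bounded.** If `ω` is a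
positive continuous linear functional on a non-unital C*-algebra, then
`‖ω a‖² ≤ ‖ω‖ · ω(a*a)` for every `a`. -/
theorem positive_functional_hilbertBounded {A : Type*} [NonUnitalCStarAlgebra A]
    (ω : A →L[ℂ] ℂ)
    (hpos : ∀ a : A, (ω (star a * a)).im = 0 ∧ 0 ≤ (ω (star a * a)).re) :
    ∀ a : A, ‖ω a‖ ^ 2 ≤ ‖ω‖ * (ω (star a * a)).re := by
  intro a
  have h := fun n : ℕ => approx_aux a ((n : ℝ) + 1) (by positivity)
  choose E hE1 hE2 hE3 using h
  have key : ∀ n : ℕ, ‖ω (E n * a)‖ ^ 2 ≤ ‖ω‖ * (ω (star a * a)).re := by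
    intro n
    have hcs := cs_aux_s8 ω hpos (E n) a
    rw [(hE1 n).star_eq] at hcs
    have hq : 0 ≤ (ω (star a * a)).re := (hpos a).2
    have hee : (ω (E n * E n)).re ≤ ‖ω‖ := by
      calc (ω (E n * E n)).re ≤ ‖ω (E n * E n)‖ := Complex.re_le_norm _
        _ ≤ ‖ω‖ * ‖E n * E n‖ := ω.le_opNorm _
        _ ≤ ‖ω‖ * (‖E n‖ * ‖E n‖) := by
            gcongr; exact norm_mul_le _ _
        _ ≤ ‖ω‖ * (1 * 1) := by
            gcongr <;> first | exact norm_nonneg _ | exact hE2 n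
        _ = ‖ω‖ := by ring
    calc ‖ω (E n * a)‖ ^ 2 ≤ (ω (E n * E n)).re * (ω (star a * a)).re := hcs
      _ ≤ ‖ω‖ * (ω (star a * a)).re := by gcongr
  have hlim : Tendsto (fun n : ℕ => E n * a) atTop (𝓝 a) := by
    rw [tendsto_iff_norm_sub_tendsto_zero]
    have hb : ∀ n : ℕ, ‖E n * a - a‖ ≤ Real.sqrt (1 / (4 * ((n : ℝ) + 1))) := by
      intro n
      rw [Real.le_sqrt (norm_nonneg _)]
      · exact hE3 n
      · positivity
    refine squeeze_zero (fun n => norm_nonneg _) hb ?_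
    rw [show (0:ℝ) = Real.sqrt 0 by simp]
    refine (Real.continuous_sqrt.tendsto 0).comp ?_
    have : Tendsto (fun n : ℕ => 4 * ((n : ℝ) + 1)) atTop atTop := by
      apply Tendsto.const_mul_atTop (by norm_num)
      exact tendsto_natCast_atTop_atTop.atTop_add tendsto_const_nhds
    exact this.inv_tendsto_atTop.congr (by intro n; simp [one_div])
  have htend : Tendsto (fun n : ℕ => ‖ω (E n * a)‖ ^ 2) atTop (𝓝 (‖ω a‖ ^ 2)) := by
    have := (ω.continuous.tendsto a).comp hlim
    exact (this.norm).pow 2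
  exact le_of_tendsto htend (Eventually.of_forall key)
end

section
/- Let ω be a positive linear functional on a non-unital complex *-algebra A. For x ∈ A let p_ω(x) = sSup { t : ℝ | ∃ a ∈ A, ω (star a * a) = 1 ∧ t = ‖ω (star x * a)‖² } (with the convention sSup ∅ = 0). Then for every x ∈ A and every λ ∈ ℂ, Real.sqrt (p_ω (λ • x)) = ‖λ‖ · Real.sqrt (p_ω x). -/
open Pointwise

/-- `p_ω(x) = sup { |ω(x*a)|² : ω(a*a) = 1 }` (with `sSup ∅ = 0`). -/
noncomputable def pOmega {A : Type*} [NonUnitalRing A] [StarRing A] [Module ℂ A]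
    (ω : A →ₗ[ℂ] ℂ) (x : A) : ℝ :=
  sSup {t : ℝ | ∃ a : A, ω (star a * a) = 1 ∧ t = ‖ω (star x * a)‖ ^ 2}

/-- **Absolute homogeneity of the seminorm `x ↦ √(p_ω(x))`.** -/
theorem sqrt_pOmega_smul {A : Type*} [NonUnitalRing A] [StarRing A] [Module ℂ A]
    [StarModule ℂ A] [SMulCommClass ℂ A A] [IsScalarTower ℂ A A]
    (ω : A →ₗ[ℂ] ℂ)
    (hpos : ∀ a : A, (ω (star a * a)).im = 0 ∧ 0 ≤ (ω (star a * a)).re) :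
    ∀ (x : A) (lam : ℂ),
      Real.sqrt (pOmega ω (lam • x)) = ‖lam‖ * Real.sqrt (pOmega ω x) := by
  intro x lam
  have hset : {t : ℝ | ∃ a : A, ω (star a * a) = 1 ∧ t = ‖ω (star (lam • x) * a)‖ ^ 2}
      = (‖lam‖ ^ 2) • {t : ℝ | ∃ a : A, ω (star a * a) = 1 ∧ t = ‖ω (star x * a)‖ ^ 2} := by
    ext t
    constructor
    · rintro ⟨a, ha, rfl⟩
      refine ⟨‖ω (star x * a)‖ ^ 2, ⟨a, ha, rfl⟩, ?_⟩
      simp only [smul_eq_mul]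
      rw [star_smul, smul_mul_assoc, map_smul, smul_eq_mul, norm_mul, mul_pow]
      simp [RCLike.norm_conj]
    · rintro ⟨t, ⟨a, ha, rfl⟩, rfl⟩
      refine ⟨a, ha, ?_⟩
      simp only [smul_eq_mul]
      rw [star_smul, smul_mul_assoc, map_smul, smul_eq_mul, norm_mul, mul_pow]
      simp [RCLike.norm_conj]
  have h2 : pOmega ω (lam • x) = ‖lam‖ ^ 2 * pOmega ω x := by
    rw [pOmega, hset, Real.sSup_smul_of_nonneg (by positivity), smul_eq_mul, pOmega]
  rw [h2, Real.sqrt_mul (by positivity), Real.sqrt_sq (norm_nonneg _)]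
end

section
/- Let ω be a positive linear functional on a non-unital complex *-algebra A. For x ∈ A let p_ω(x) = sSup { t : ℝ | ∃ a ∈ A, ω (star a * a) = 1 ∧ t = ‖ω (star x * a)‖² } (with the convention sSup ∅ = 0). Then for all x, y ∈ A, Real.sqrt (p_ω (x + y)) ≤ Real.sqrt (p_ω x) + Real.sqrt (p_ω y); together with absolute homogeneity this shows that x ↦ Real.sqrt (p_ω x) is a seminorm on A. -/
section aux

variable {A : Type*} [NonUnitalRing A] [StarRing A] [Module ℂ A]
    [StarModule ℂ A] [SMulCommClass ℂ A A] [IsScalarTower ℂ A A]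

lemma pOmega_expand (ω : A →ₗ[ℂ] ℂ) (u v : A) (t : ℂ) :
    ω (star (u + t • v) * (u + t • v)) =
      ω (star u * u) + t * ω (star u * v) + (starRingEnd ℂ) t * ω (star v * u)
        + ((starRingEnd ℂ) t * t) * ω (star v * v) := by
  rw [star_add, star_smul, add_mul, mul_add, mul_add]
  simp only [smul_mul_assoc, mul_smul_comm, map_add, map_smul, smul_eq_mul, smul_smul,
    starRingEnd_apply]
  ring

lemma pOmega_herm (ω : A →ₗ[ℂ] ℂ)
    (hpos : ∀ a : A, (ω (star a * a)).im = 0 ∧ 0 ≤ (ω (star a * a)).re)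
    (x y : A) : ω (star y * x) = (starRingEnd ℂ) (ω (star x * y)) := by
  have h1 := (hpos (x + (1 : ℂ) • y)).1
  have h2 := (hpos (x + (Complex.I : ℂ) • y)).1
  rw [pOmega_expand ω x y 1] at h1
  rw [pOmega_expand ω x y Complex.I] at h2
  have hx := (hpos x).1
  have hy := (hpos y).1
  simp only [map_one, one_mul, mul_one, Complex.add_im, Complex.mul_im, Complex.mul_re,
    Complex.conj_I, Complex.I_re, Complex.I_im, Complex.neg_re, Complex.neg_im] at h1 h2
  apply Complex.ext <;> simp only [Complex.conj_re, Complex.conj_im] <;> linarith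

lemma pOmega_cs (ω : A →ₗ[ℂ] ℂ)
    (hpos : ∀ a : A, (ω (star a * a)).im = 0 ∧ 0 ≤ (ω (star a * a)).re)
    (z a : A) (ha : ω (star a * a) = 1) :
    ‖ω (star z * a)‖ ^ 2 ≤ (ω (star z * z)).re := by
  set B := ω (star z * a) with hB
  have h := (hpos (z + (-(starRingEnd ℂ) B) • a)).2
  rw [pOmega_expand ω z a (-(starRingEnd ℂ) B), ha, pOmega_herm ω hpos z a, ← hB] at h
  have hexp : ∀ (w c : ℂ), w + -(starRingEnd ℂ) c * c +
      (starRingEnd ℂ) (-(starRingEnd ℂ) c) * (starRingEnd ℂ) c +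
      (starRingEnd ℂ) (-(starRingEnd ℂ) c) * -(starRingEnd ℂ) c * 1
      = w - (Complex.normSq c : ℂ) := by
    intro w c
    simp only [map_neg, Complex.conj_conj, mul_one]
    linear_combination -Complex.mul_conj c
  rw [hexp] at h
  have hnorm : ‖B‖ ^ 2 = Complex.normSq B := by
    rw [Complex.sq_norm]
  rw [hnorm]
  simp only [Complex.sub_re, Complex.ofReal_re] at h
  linarith

end aux

/-- **Subadditivity of the seminorm `x ↦ √(p_ω(x))`.** -/
theorem sqrt_pOmega_add_le {A : Type*} [NonUnitalRing A] [StarRing A] [Module ℂ A]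
    [StarModule ℂ A] [SMulCommClass ℂ A A] [IsScalarTower ℂ A A]
    (ω : A →ₗ[ℂ] ℂ)
    (hpos : ∀ a : A, (ω (star a * a)).im = 0 ∧ 0 ≤ (ω (star a * a)).re) :
    ∀ x y : A,
      Real.sqrt (pOmega ω (x + y)) ≤ Real.sqrt (pOmega ω x) + Real.sqrt (pOmega ω y) := by
  intro x y
  have bdd : ∀ z : A, BddAbove {t : ℝ | ∃ a : A, ω (star a * a) = 1 ∧ t = ‖ω (star z * a)‖ ^ 2} := by
    intro z
    refine ⟨(ω (star z * z)).re, ?_⟩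
    rintro t ⟨a, ha, rfl⟩
    exact pOmega_cs ω hpos z a ha
  have mem_le : ∀ z a, ω (star a * a) = 1 → ‖ω (star z * a)‖ ≤ Real.sqrt (pOmega ω z) := by
    intro z a ha
    have h1 : ‖ω (star z * a)‖ ^ 2 ≤ pOmega ω z := le_csSup (bdd z) ⟨a, ha, rfl⟩
    calc ‖ω (star z * a)‖ = Real.sqrt (‖ω (star z * a)‖ ^ 2) := by
          rw [Real.sqrt_sq (norm_nonneg _)]
      _ ≤ Real.sqrt (pOmega ω z) := Real.sqrt_le_sqrt h1
  have hle : pOmega ω (x + y) ≤ (Real.sqrt (pOmega ω x) + Real.sqrt (pOmega ω y)) ^ 2 := by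
    apply Real.sSup_le
    · rintro t ⟨a, ha, rfl⟩
      have hsum : ‖ω (star (x + y) * a)‖ ≤ Real.sqrt (pOmega ω x) + Real.sqrt (pOmega ω y) := by
        have hsplit : star (x + y) * a = star x * a + star y * a := by
          rw [star_add, add_mul]
        rw [hsplit, map_add]
        exact (norm_add_le _ _).trans (add_le_add (mem_le x a ha) (mem_le y a ha))
      exact pow_le_pow_left₀ (norm_nonneg _) hsum 2
    · positivity
  calc Real.sqrt (pOmega ω (x + y))
      ≤ Real.sqrt ((Real.sqrt (pOmega ω x) + Real.sqrt (pOmega ω y)) ^ 2) :=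
        Real.sqrt_le_sqrt hle
    _ = _ := Real.sqrt_sq (by positivity)
end
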